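/- Let a, b ∈ ℝ and let x, y : ℝ → ℝ be four-times differentiable functions satisfying x″ = a·x + b·y′ and y″ = a·y − b·x′ on ℝ. Then x⁗ + (b² − 2a)·x″ + a²·x = 0 and y⁗ + (b² − 2a)·y″ + a²·y = 0 on ℝ. -/

import Mathlib

/-- from the coupled system `x″ = ax + by′`, `y″ = ay − bx′` one
obtains the fourth-order equations `x⁗ + (b²−2a)x″ + a²x = 0` and
`y⁗ + (b²−2a)y″ + a²y = 0`. -/
theorem stmt9 (a b : ℝ) (x y : ℝ → ℝ)
    (hx1 : Differentiable ℝ x)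
    (hx2 : Differentiable ℝ (deriv x))
    (hx3 : Differentiable ℝ (deriv (deriv x)))
    (hx4 : Differentiable ℝ (deriv (deriv (deriv x))))
    (hy1 : Differentiable ℝ y)
    (hy2 : Differentiable ℝ (deriv y))
    (hy3 : Differentiable ℝ (deriv (deriv y)))
    (hy4 : Differentiable ℝ (deriv (deriv (deriv y))))
    (hxode : ∀ u, deriv (deriv x) u = a * x u + b * deriv y u)
    (hyode : ∀ u, deriv (deriv y) u = a * y u - b * deriv x u) :
    (∀ u, deriv (deriv (deriv (deriv x))) u
      + (b ^ 2 - 2 * a) * deriv (deriv x) u + a ^ 2 * x u = 0) ∧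
    (∀ u, deriv (deriv (deriv (deriv y))) u
      + (b ^ 2 - 2 * a) * deriv (deriv y) u + a ^ 2 * y u = 0) := by
  have hxodeE : deriv (deriv x) = fun u => a * x u + b * deriv y u := funext hxode
  have hyodeE : deriv (deriv y) = fun u => a * y u - b * deriv x u := funext hyode
  have hx3' : ∀ u, deriv (deriv (deriv x)) u
      = a * deriv x u + b * deriv (deriv y) u := by
    intro u
    rw [hxodeE]
    rw [deriv_fun_add ((hx1 u).const_mul a) ((hy2 u).const_mul b),
      deriv_const_mul a (hx1 u), deriv_const_mul b (hy2 u)]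
  have hy3' : ∀ u, deriv (deriv (deriv y)) u
      = a * deriv y u - b * deriv (deriv x) u := by
    intro u
    rw [hyodeE]
    rw [deriv_fun_sub ((hy1 u).const_mul a) ((hx2 u).const_mul b),
      deriv_const_mul a (hy1 u), deriv_const_mul b (hx2 u)]
  have hx3E : deriv (deriv (deriv x))
      = fun u => a * deriv x u + b * deriv (deriv y) u := funext hx3'
  have hy3E : deriv (deriv (deriv y))
      = fun u => a * deriv y u - b * deriv (deriv x) u := funext hy3'
  have hx4' : ∀ u, deriv (deriv (deriv (deriv x))) u
      = a * deriv (deriv x) u + b * deriv (deriv (deriv y)) u := by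
    intro u
    rw [hx3E]
    rw [deriv_fun_add ((hx2 u).const_mul a) ((hy3 u).const_mul b),
      deriv_const_mul a (hx2 u), deriv_const_mul b (hy3 u)]
  have hy4' : ∀ u, deriv (deriv (deriv (deriv y))) u
      = a * deriv (deriv y) u - b * deriv (deriv (deriv x)) u := by
    intro u
    rw [hy3E]
    rw [deriv_fun_sub ((hy2 u).const_mul a) ((hx3 u).const_mul b),
      deriv_const_mul a (hy2 u), deriv_const_mul b (hx3 u)]
  constructor
  · intro u
    rw [hx4' u, hy3' u, hxode u]
    ring
  · intro u
    rw [hy4' u, hx3' u, hyode u]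
    ring
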